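/- arXiv:1912.01395 — 3 statements merged into one kernel-verified Lean document; each statement's English description precedes it below -/
import Mathlib

section
/- Let j ≥ 0 and 0 ≤ k ≤ 2^j − 1 be integers and set i = 2^j + k + 1. Then for every t ∈ [0,1], 0 ≤ p_{2,i}(t) ≤ (2^{−(j+1)})². -/
open MeasureTheory Real

/-- Left endpoint of the support of the Haar wavelet indexed by `(j, k)`. -/
noncomputable def eta1 (j k : ℕ) : ℝ := (k : ℝ) / 2 ^ j

/-- Midpoint of the support of the Haar wavelet indexed by `(j, k)`. -/
noncomputable def eta2 (j k : ℕ) : ℝ := (2 * (k : ℝ) + 1) / 2 ^ (j + 1)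

/-- Right endpoint of the support of the Haar wavelet indexed by `(j, k)`. -/
noncomputable def eta3 (j k : ℕ) : ℝ := ((k : ℝ) + 1) / 2 ^ j

/-- The Haar wavelet `h_i` with `i = 2^j + k + 1`: equals `1` on `[η₁, η₂)`,
`-1` on `[η₂, η₃)` and `0` elsewhere. -/
noncomputable def haarJK (j k : ℕ) (t : ℝ) : ℝ :=
  if eta1 j k ≤ t ∧ t < eta2 j k then 1
  else if eta2 j k ≤ t ∧ t < eta3 j k then -1
  else 0

/-- `p_{2,i}(t) = ∫₀ᵗ (t - s) h_i(s) ds` where `i = 2^j + k + 1`. -/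
noncomputable def p2JK (j k : ℕ) (t : ℝ) : ℝ := ∫ s in (0:ℝ)..t, (t - s) * haarJK j k s

lemma ae_ne' (c : ℝ) : ∀ᵐ s : ℝ, s ≠ c := by
  rw [ae_iff]
  simpa using measure_singleton c

lemma eta2_eq (j k : ℕ) : eta2 j k = eta1 j k + 1/2^(j+1) := by
  unfold eta1 eta2; rw [pow_succ]; field_simp

lemma eta3_eq (j k : ℕ) : eta3 j k = eta1 j k + 2*(1/2^(j+1)) := by
  unfold eta1 eta3; rw [pow_succ]; field_simp

lemma haar_meas (j k : ℕ) : Measurable (haarJK j k) := by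
  unfold haarJK
  exact Measurable.ite measurableSet_Ico measurable_const
    (Measurable.ite measurableSet_Ico measurable_const measurable_const)

lemma haar_ii (j k : ℕ) (t x y : ℝ) :
    IntervalIntegrable (fun s => (t - s) * haarJK j k s) volume x y := by
  have h1 : IntervalIntegrable (haarJK j k) volume x y := by
    rw [intervalIntegrable_iff]
    have hone : IntegrableOn (fun _ : ℝ => (1:ℝ)) (Set.uIoc x y) :=
      integrableOn_const measure_Ioc_lt_top.ne
    apply hone.mono' (haar_meas j k).aestronglyMeasurable
    filter_upwards with s
    unfold haarJK; split_ifs <;> simp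
  exact h1.continuousOn_mul (by fun_prop)

lemma integ_linear (t c x y : ℝ) :
    ∫ s in x..y, (t - s) * c = (t*(y-x) - (y^2-x^2)/2) * c := by
  rw [intervalIntegral.integral_mul_const,
    intervalIntegral.integral_sub (intervalIntegrable_const (c := t))
      intervalIntegral.intervalIntegrable_id,
    integral_id, intervalIntegral.integral_const, smul_eq_mul]
  ring

lemma integral_congr_const (j k : ℕ) (t x y v : ℝ)
    (h : ∀ᵐ s : ℝ, s ∈ Set.uIoc x y → haarJK j k s = v) :
    ∫ s in x..y, (t - s) * haarJK j k s = (t*(y-x) - (y^2-x^2)/2) * v := by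
  rw [← integ_linear]
  apply intervalIntegral.integral_congr_ae
  filter_upwards [h] with s hs hmem
  rw [hs hmem]

lemma haar_zero_left (j k : ℕ) {s : ℝ} (hs : s < eta1 j k) : haarJK j k s = 0 := by
  have h2 := eta2_eq j k
  have hD : (0:ℝ) < 1/2^(j+1) := by positivity
  unfold haarJK
  rw [if_neg, if_neg] <;> rintro ⟨h, -⟩ <;> linarith

lemma haar_one (j k : ℕ) {s : ℝ} (h1 : eta1 j k ≤ s) (h2 : s < eta2 j k) : haarJK j k s = 1 := by
  unfold haarJK; rw [if_pos ⟨h1, h2⟩]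

lemma haar_neg (j k : ℕ) {s : ℝ} (h1 : eta2 j k ≤ s) (h2 : s < eta3 j k) : haarJK j k s = -1 := by
  unfold haarJK
  rw [if_neg, if_pos ⟨h1, h2⟩]
  rintro ⟨-, h⟩; linarith

lemma haar_zero_right (j k : ℕ) {s : ℝ} (hs : eta3 j k ≤ s) : haarJK j k s = 0 := by
  have h2 := eta2_eq j k
  have h3 := eta3_eq j k
  have hD : (0:ℝ) < 1/2^(j+1) := by positivity
  unfold haarJK
  rw [if_neg, if_neg] <;> rintro ⟨-, h⟩ <;> linarith

/-- `0 ≤ p_{2,i}(t) ≤ (2^{-(j+1)})²` on `[0,1]`. -/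
theorem p2_bounds (j k : ℕ) (hk : k ≤ 2 ^ j - 1) :
    ∀ t ∈ Set.Icc (0:ℝ) 1,
      0 ≤ p2JK j k t ∧ p2JK j k t ≤ (1 / 2 ^ (j + 1)) ^ 2 := by
  intro t ht
  obtain ⟨ht0, ht1⟩ := ht
  set a := eta1 j k with ha
  set b := eta2 j k with hbdef
  set c := eta3 j k with hcdef
  set D : ℝ := 1/2^(j+1) with hDdef
  have hD0 : 0 < D := by positivity
  have hb : b = a + D := eta2_eq j k
  have hc : c = a + 2*D := eta3_eq j k
  have ha0 : 0 ≤ a := by rw [ha]; unfold eta1; positivity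
  rcases le_or_gt t a with h1 | h1
  · -- t ≤ a : p = 0
    have key : p2JK j k t = 0 := by
      unfold p2JK
      have := integral_congr_const j k t 0 t 0 ?_
      · rw [this]; ring
      · filter_upwards [ae_ne' a] with s hsa hmem
        rw [Set.uIoc_of_le ht0] at hmem
        exact haar_zero_left j k (lt_of_le_of_ne (hmem.2.trans h1) hsa)
    rw [key]; constructor
    · exact le_refl 0
    · positivity
  rcases le_or_gt t b with h2 | h2
  · -- a < t ≤ b : p = (t-a)^2/2
    have key : p2JK j k t = (t - a)^2 / 2 := by
      unfold p2JK
      rw [← intervalIntegral.integral_add_adjacent_intervals (haar_ii j k t 0 a) (haar_ii j k t a t)]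
      have e1 := integral_congr_const j k t 0 a 0 ?_
      have e2 := integral_congr_const j k t a t 1 ?_
      · rw [e1, e2]; ring
      · filter_upwards [ae_ne' b] with s hsb hmem
        rw [Set.uIoc_of_le h1.le] at hmem
        exact haar_one j k hmem.1.le (lt_of_le_of_ne (hmem.2.trans h2) hsb)
      · filter_upwards [ae_ne' a] with s hsa hmem
        rw [Set.uIoc_of_le ha0] at hmem
        exact haar_zero_left j k (lt_of_le_of_ne hmem.2 hsa)
    rw [key]; constructor
    · positivity
    · nlinarith
  rcases le_or_gt t c with h3 | h3
  · -- b < t ≤ c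
    have key : p2JK j k t = ((t-a)^2 - 2*(t-b)^2) / 2 := by
      unfold p2JK
      rw [← intervalIntegral.integral_add_adjacent_intervals (haar_ii j k t 0 b) (haar_ii j k t b t),
        ← intervalIntegral.integral_add_adjacent_intervals (haar_ii j k t 0 a) (haar_ii j k t a b)]
      have e1 := integral_congr_const j k t 0 a 0 ?_
      have e2 := integral_congr_const j k t a b 1 ?_
      have e3 := integral_congr_const j k t b t (-1) ?_
      · rw [e1, e2, e3]; ring
      · filter_upwards [ae_ne' c] with s hsc hmem
        rw [Set.uIoc_of_le h2.le] at hmem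
        exact haar_neg j k hmem.1.le (lt_of_le_of_ne (hmem.2.trans h3) hsc)
      · filter_upwards [ae_ne' b] with s hsb hmem
        rw [Set.uIoc_of_le (by linarith : a ≤ b)] at hmem
        exact haar_one j k hmem.1.le (lt_of_le_of_ne hmem.2 hsb)
      · filter_upwards [ae_ne' a] with s hsa hmem
        rw [Set.uIoc_of_le ha0] at hmem
        exact haar_zero_left j k (lt_of_le_of_ne hmem.2 hsa)
    rw [key]; constructor
    · nlinarith
    · nlinarith
  · -- c < t
    have key : p2JK j k t = D^2 := by
      unfold p2JK
      rw [← intervalIntegral.integral_add_adjacent_intervals (haar_ii j k t 0 c) (haar_ii j k t c t),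
        ← intervalIntegral.integral_add_adjacent_intervals (haar_ii j k t 0 b) (haar_ii j k t b c),
        ← intervalIntegral.integral_add_adjacent_intervals (haar_ii j k t 0 a) (haar_ii j k t a b)]
      have e1 := integral_congr_const j k t 0 a 0 ?_
      have e2 := integral_congr_const j k t a b 1 ?_
      have e3 := integral_congr_const j k t b c (-1) ?_
      have e4 := integral_congr_const j k t c t 0 ?_
      · rw [e1, e2, e3, e4, hb, hc]; ring
      · filter_upwards with s hmem
        rw [Set.uIoc_of_le h3.le] at hmem
        exact haar_zero_right j k hmem.1.le
      · filter_upwards [ae_ne' c] with s hsc hmem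
        rw [Set.uIoc_of_le (by linarith : b ≤ c)] at hmem
        exact haar_neg j k hmem.1.le (lt_of_le_of_ne hmem.2 hsc)
      · filter_upwards [ae_ne' b] with s hsb hmem
        rw [Set.uIoc_of_le (by linarith : a ≤ b)] at hmem
        exact haar_one j k hmem.1.le (lt_of_le_of_ne hmem.2 hsb)
      · filter_upwards [ae_ne' a] with s hsa hmem
        rw [Set.uIoc_of_le ha0] at hmem
        exact haar_zero_left j k (lt_of_le_of_ne hmem.2 hsa)
    rw [key]; exact ⟨by positivity, le_refl _⟩
end

section
/- Let j ≥ 0 and 0 ≤ k ≤ 2^j − 1 be integers and set i = 2^j + k + 1. Then for every t ∈ [0,1], |p_{2,i}(t) − p_{2,i}(1)| ≤ 2·(2^{−(j+1)})². -/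
open MeasureTheory Real

lemma ae_ne_point (b : ℝ) : ∀ᵐ x : ℝ, x ≠ b := by
  rw [MeasureTheory.ae_iff]; simpa using Real.volume_singleton

lemma integral_lin (t a b : ℝ) : ∫ s in a..b, (t - s) = t * (b - a) - (b^2 - a^2)/2 := by
  rw [intervalIntegral.integral_sub intervalIntegrable_const intervalIntegral.intervalIntegrable_id,
    intervalIntegral.integral_const, integral_id]
  push_cast [smul_eq_mul]
  ring

lemma haar_abs_le (j k : ℕ) (s : ℝ) : |haarJK j k s| ≤ 1 := by
  unfold haarJK; split_ifs <;> norm_num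

lemma haar_intble (j k : ℕ) (t a b : ℝ) :
    IntervalIntegrable (fun s => (t - s) * haarJK j k s) volume a b := by
  rw [intervalIntegrable_iff]
  apply MeasureTheory.Integrable.mono'
    (g := fun s => |t - s|)
    (intervalIntegrable_iff.mp ((continuous_const.sub continuous_id).abs.intervalIntegrable a b))
  · exact ((measurable_const.sub measurable_id).mul (haar_meas j k)).aestronglyMeasurable
  · filter_upwards with s
    rw [norm_mul, Real.norm_eq_abs, Real.norm_eq_abs]
    calc |t - s| * |haarJK j k s| ≤ |t - s| * 1 :=
      mul_le_mul_of_nonneg_left (haar_abs_le j k s) (abs_nonneg _)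
    _ = |t - s| := by ring

lemma piece_eval (j k : ℕ) (t a b c : ℝ) (hab : a ≤ b)
    (h : ∀ s ∈ Set.Ioo a b, haarJK j k s = c) :
    ∫ s in a..b, (t - s) * haarJK j k s = c * (t * (b - a) - (b^2 - a^2)/2) := by
  have : ∫ s in a..b, (t - s) * haarJK j k s = ∫ s in a..b, c * (t - s) := by
    apply intervalIntegral.integral_congr_ae
    filter_upwards [ae_ne_point b] with x hx hmem
    rw [Set.uIoc_of_le hab] at hmem
    rw [h x ⟨hmem.1, lt_of_le_of_ne hmem.2 hx⟩]; ring
  rw [this, intervalIntegral.integral_const_mul, integral_lin]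

lemma p2_abs_le (j k : ℕ) (t : ℝ) (ht : 0 ≤ t) :
    |p2JK j k t| ≤ (1 / 2 ^ (j + 1) : ℝ)^2 := by
  set e1 := eta1 j k with he1def
  set e2 := eta2 j k with he2def
  set e3 := eta3 j k with he3def
  set D : ℝ := 1 / 2 ^ (j + 1) with hDdef
  have hD : 0 < D := by positivity
  have he2 : e2 = e1 + D := by
    rw [he1def, he2def, hDdef, eta1, eta2, pow_succ]; field_simp
  have he3 : e3 = e1 + 2 * D := by
    rw [he1def, he3def, hDdef, eta1, eta3, pow_succ]; field_simp
  have he1 : 0 ≤ e1 := by rw [he1def, eta1]; positivity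
  have hv1 : ∀ s, e1 ≤ s → s < e2 → haarJK j k s = 1 := fun s h1 h2 => if_pos ⟨h1, h2⟩
  have hv2 : ∀ s, e2 ≤ s → s < e3 → haarJK j k s = -1 := by
    intro s h1 h2
    rw [haarJK, if_neg (fun hc => absurd hc.2 (not_lt.2 h1)), if_pos ⟨h1, h2⟩]
  have hv0a : ∀ s, s < e1 → haarJK j k s = 0 := by
    intro s h1
    rw [haarJK, if_neg (fun hc => absurd hc.1 (not_le.2 h1)),
      if_neg (fun hc => absurd hc.1 (not_le.2 (by linarith)))]
  have hv0b : ∀ s, e3 ≤ s → haarJK j k s = 0 := by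
    intro s h1
    rw [haarJK, if_neg (fun hc => absurd hc.2 (not_lt.2 (by linarith))),
      if_neg (fun hc => absurd hc.2 (not_lt.2 h1))]
  rw [p2JK]
  rcases le_or_gt t e1 with h | h
  · rw [piece_eval j k t 0 t 0 ht (fun s hs => hv0a s (lt_of_lt_of_le hs.2 h))]
    rw [abs_le]; constructor <;> nlinarith
  rcases le_or_gt t e2 with h2 | h2
  · rw [← intervalIntegral.integral_add_adjacent_intervals (haar_intble j k t 0 e1)
      (haar_intble j k t e1 t),
      piece_eval j k t 0 e1 0 he1 (fun s hs => hv0a s hs.2),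
      piece_eval j k t e1 t 1 h.le (fun s hs => hv1 s hs.1.le (lt_of_lt_of_le hs.2 h2))]
    rw [abs_le]; constructor <;> nlinarith
  rcases le_or_gt t e3 with h3 | h3
  · rw [← intervalIntegral.integral_add_adjacent_intervals (haar_intble j k t 0 e2)
      (haar_intble j k t e2 t),
      ← intervalIntegral.integral_add_adjacent_intervals (haar_intble j k t 0 e1)
      (haar_intble j k t e1 e2),
      piece_eval j k t 0 e1 0 he1 (fun s hs => hv0a s hs.2),
      piece_eval j k t e1 e2 1 (by linarith) (fun s hs => hv1 s hs.1.le hs.2),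
      piece_eval j k t e2 t (-1) h2.le (fun s hs => hv2 s hs.1.le (lt_of_lt_of_le hs.2 h3))]
    rw [abs_le]; constructor <;> nlinarith
  · rw [← intervalIntegral.integral_add_adjacent_intervals (haar_intble j k t 0 e3)
      (haar_intble j k t e3 t),
      ← intervalIntegral.integral_add_adjacent_intervals (haar_intble j k t 0 e2)
      (haar_intble j k t e2 e3),
      ← intervalIntegral.integral_add_adjacent_intervals (haar_intble j k t 0 e1)
      (haar_intble j k t e1 e2),
      piece_eval j k t 0 e1 0 he1 (fun s hs => hv0a s hs.2),
      piece_eval j k t e1 e2 1 (by linarith) (fun s hs => hv1 s hs.1.le hs.2),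
      piece_eval j k t e2 e3 (-1) (by linarith) (fun s hs => hv2 s hs.1.le hs.2),
      piece_eval j k t e3 t 0 h3.le (fun s hs => hv0b s hs.1.le)]
    rw [abs_le]; constructor <;> nlinarith

/-- `|p_{2,i}(t) - p_{2,i}(1)| ≤ 2·(2^{-(j+1)})²` on `[0,1]`. -/
theorem p2_diff_bound (j k : ℕ) (hk : k ≤ 2 ^ j - 1) :
    ∀ t ∈ Set.Icc (0:ℝ) 1,
      |p2JK j k t - p2JK j k 1| ≤ 2 * (1 / 2 ^ (j + 1)) ^ 2 := by
  intro t ht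
  have h1 := p2_abs_le j k t ht.1
  have h2 := p2_abs_le j k 1 zero_le_one
  calc |p2JK j k t - p2JK j k 1| ≤ |p2JK j k t| + |p2JK j k 1| := abs_sub _ _
  _ ≤ 2 * (1 / 2 ^ (j + 1)) ^ 2 := by linarith
end

section
/- (Convergence of the Haar wavelet method for the BVP.) Let y, z : [0,1] → ℝ be three times differentiable with |y'''(t)| ≤ ξ₁ and |z'''(t)| ≤ ξ₂ for all t ∈ [0,1], where ξ₂ ≤ ξ₁ and ξ₁ > 0. Define the Haar coefficients a_{2^j+k+1} = 2^j ∫₀¹ y''(t) h_{2^j+k+1}(t) dt and b_{2^j+k+1} = 2^j ∫₀¹ z''(t) h_{2^j+k+1}(t) dt, and for an integer J ≥ 0 define Ẽ_{M1}(t) = Σ_{j=J+1}^∞ Σ_{k=0}^{2^j−1} a_{2^j+k+1} (p_{2,2^j+k+1}(t) − p_{2,2^j+k+1}(1)), Ẽ_{M2}(t) defined analogously with the coefficients b, and ‖Ẽ_M‖₂ = ‖Ẽ_{M1}‖₂ + ‖Ẽ_{M2}‖₂. Then for every ε > 0, if J > log₂(√(2ξ₁/(3ε))) − 1, then ‖Ẽ_M‖₂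 < ε. -/
open MeasureTheory Real

/-- The Haar coefficient `2^j ∫₀¹ f(t) h_{2^j+k+1}(t) dt` of a function `f`. -/
noncomputable def haarCoeff (f : ℝ → ℝ) (j k : ℕ) : ℝ :=
  2 ^ j * ∫ t in (0:ℝ)..1, f t * haarJK j k t

/-- Truncation error of the Haar expansion at resolution `J`:
`Σ_{j=J+1}^∞ Σ_{k=0}^{2^j-1} c_{j,k} p_{2,2^j+k+1}(t)` (here the outer sum is
reindexed by `j = J + 1 + m`). -/
noncomputable def truncErr (c : ℕ → ℕ → ℝ) (J : ℕ) (t : ℝ) : ℝ :=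
  ∑' m : ℕ, ∑ k ∈ Finset.range (2 ^ (J + 1 + m)), c (J + 1 + m) k * p2JK (J + 1 + m) k t

/-- The `L²([0,1])` norm of a function. -/
noncomputable def L2norm (f : ℝ → ℝ) : ℝ := Real.sqrt (∫ t in (0:ℝ)..1, f t ^ 2)

/-- Truncation error of the Haar expansion in the BVP case, at resolution `J`:
`Σ_{j=J+1}^∞ Σ_{k=0}^{2^j-1} c_{j,k} (p_{2,2^j+k+1}(t) - p_{2,2^j+k+1}(1))`
(the outer sum is reindexed by `j = J + 1 + m`). -/
noncomputable def truncErrBVP (c : ℕ → ℕ → ℝ) (J : ℕ) (t : ℝ) : ℝ :=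
  ∑' m : ℕ, ∑ k ∈ Finset.range (2 ^ (J + 1 + m)),
    c (J + 1 + m) k * (p2JK (J + 1 + m) k t - p2JK (J + 1 + m) k 1)
namespace HaarAux

/-- Half-width of the support of the Haar wavelet at level `j`. -/
noncomputable def D (j : ℕ) : ℝ := ((2:ℝ) ^ (j + 1))⁻¹

lemma D_pos (j : ℕ) : 0 < D j := by unfold D; positivity

lemma eta2_eq (j k : ℕ) : eta2 j k = eta1 j k + D j := by
  unfold eta2 eta1 D
  rw [pow_succ]
  field_simp

lemma eta3_eq (j k : ℕ) : eta3 j k = eta1 j k + 2 * D j := by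
  unfold eta3 eta1 D
  rw [pow_succ]
  field_simp

lemma eta1_nonneg (j k : ℕ) : 0 ≤ eta1 j k := by unfold eta1; positivity

lemma eta3_le_one {j k : ℕ} (hk : k < 2 ^ j) : eta3 j k ≤ 1 := by
  unfold eta3
  rw [div_le_one (by positivity)]
  have : (k : ℝ) + 1 ≤ ((2 ^ j : ℕ) : ℝ) := by exact_mod_cast Nat.succ_le_of_lt hk
  simpa using this

lemma haar_eq_one {j k : ℕ} {s : ℝ} (h1 : eta1 j k ≤ s) (h2 : s < eta2 j k) :
    haarJK j k s = 1 := if_pos ⟨h1, h2⟩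

lemma haar_eq_neg_one {j k : ℕ} {s : ℝ} (h1 : eta2 j k ≤ s) (h2 : s < eta3 j k) :
    haarJK j k s = -1 := by
  unfold haarJK
  rw [if_neg, if_pos ⟨h1, h2⟩]
  rintro ⟨-, h⟩
  exact absurd h1 (not_le.mpr h)

lemma haar_eq_zero_left {j k : ℕ} {s : ℝ} (h : s < eta1 j k) : haarJK j k s = 0 := by
  have h1 : eta1 j k ≤ eta2 j k := by rw [eta2_eq]; linarith [D_pos j]
  unfold haarJK
  rw [if_neg, if_neg]
  · rintro ⟨h2, -⟩; linarith
  · rintro ⟨h2, -⟩; linarith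

lemma haar_eq_zero_right {j k : ℕ} {s : ℝ} (h : eta3 j k ≤ s) : haarJK j k s = 0 := by
  have h1 : eta2 j k ≤ eta3 j k := by
    rw [eta2_eq, eta3_eq]; linarith [D_pos j]
  unfold haarJK
  rw [if_neg, if_neg]
  · rintro ⟨-, h2⟩; linarith
  · rintro ⟨-, h2⟩; linarith

lemma integral_congr_Ioo {f g : ℝ → ℝ} {a b : ℝ} (hab : a ≤ b)
    (h : ∀ x ∈ Set.Ioo a b, f x = g x) :
    ∫ x in a..b, f x = ∫ x in a..b, g x := by
  rw [intervalIntegral.integral_of_le hab, intervalIntegral.integral_of_le hab,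
    MeasureTheory.integral_Ioc_eq_integral_Ioo, MeasureTheory.integral_Ioc_eq_integral_Ioo]
  exact MeasureTheory.setIntegral_congr_fun measurableSet_Ioo h

lemma intervalIntegrable_congr_Ioo {f g : ℝ → ℝ} {a b : ℝ} (hab : a ≤ b)
    (h : ∀ x ∈ Set.Ioo a b, g x = f x) (hg : IntervalIntegrable g volume a b) :
    IntervalIntegrable f volume a b := by
  rw [intervalIntegrable_iff, Set.uIoc_of_le hab] at hg ⊢
  rw [integrableOn_Ioc_iff_integrableOn_Ioo] at hg ⊢
  exact (hg.congr_fun h measurableSet_Ioo)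

end HaarAux
namespace HaarAux

lemma integral_mul_haar {f : ℝ → ℝ} (hf : Continuous f) {j k : ℕ} (hk : k < 2 ^ j) :
    ∫ t in (0:ℝ)..1, f t * haarJK j k t
      = (∫ s in eta1 j k..eta2 j k, f s) - ∫ s in eta2 j k..eta3 j k, f s := by
  have hD := D_pos j
  have hm := eta2_eq j k
  have hb3 := eta3_eq j k
  have h0a : (0:ℝ) ≤ eta1 j k := eta1_nonneg j k
  have ham : eta1 j k ≤ eta2 j k := by linarith
  have hmb : eta2 j k ≤ eta3 j k := by linarith
  have hb1 : eta3 j k ≤ 1 := eta3_le_one hk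
  set F : ℝ → ℝ := fun t => f t * haarJK j k t with hF
  have i1 : IntervalIntegrable F volume 0 (eta1 j k) :=
    intervalIntegrable_congr_Ioo h0a (g := fun _ => (0:ℝ))
      (fun x hx => by simp [hF, haar_eq_zero_left hx.2]) intervalIntegrable_const
  have i2 : IntervalIntegrable F volume (eta1 j k) (eta2 j k) :=
    intervalIntegrable_congr_Ioo ham (g := f)
      (fun x hx => by simp [hF, haar_eq_one hx.1.le hx.2])
      (hf.intervalIntegrable _ _)
  have i3 : IntervalIntegrable F volume (eta2 j k) (eta3 j k) :=
    intervalIntegrable_congr_Ioo hmb (g := fun x => -f x)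
      (fun x hx => by simp [hF, haar_eq_neg_one hx.1.le hx.2])
      (hf.neg.intervalIntegrable _ _)
  have i4 : IntervalIntegrable F volume (eta3 j k) 1 :=
    intervalIntegrable_congr_Ioo hb1 (g := fun _ => (0:ℝ))
      (fun x hx => by simp [hF, haar_eq_zero_right hx.1.le]) intervalIntegrable_const
  have e1 : (∫ t in (0:ℝ)..eta1 j k, F t) = 0 := by
    rw [integral_congr_Ioo h0a (g := fun _ => (0:ℝ))
      (fun x hx => by simp [hF, haar_eq_zero_left hx.2])]
    simp
  have e2 : (∫ t in eta1 j k..eta2 j k, F t) = ∫ s in eta1 j k..eta2 j k, f s :=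
    integral_congr_Ioo ham (fun x hx => by simp [hF, haar_eq_one hx.1.le hx.2])
  have e3 : (∫ t in eta2 j k..eta3 j k, F t) = -∫ s in eta2 j k..eta3 j k, f s := by
    rw [integral_congr_Ioo hmb (g := fun x => -f x)
      (fun x hx => by simp [hF, haar_eq_neg_one hx.1.le hx.2])]
    exact intervalIntegral.integral_neg
  have e4 : (∫ t in eta3 j k..(1:ℝ), F t) = 0 := by
    rw [integral_congr_Ioo hb1 (g := fun _ => (0:ℝ))
      (fun x hx => by simp [hF, haar_eq_zero_right hx.1.le])]
    simp
  have split : (∫ t in (0:ℝ)..1, F t)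
      = (∫ t in (0:ℝ)..eta1 j k, F t) + ((∫ t in eta1 j k..eta2 j k, F t)
        + ((∫ t in eta2 j k..eta3 j k, F t) + ∫ t in eta3 j k..(1:ℝ), F t)) := by
    rw [intervalIntegral.integral_add_adjacent_intervals i3 i4,
      intervalIntegral.integral_add_adjacent_intervals i2 (i3.trans i4),
      intervalIntegral.integral_add_adjacent_intervals i1 (i2.trans (i3.trans i4))]
  rw [show (∫ t in (0:ℝ)..1, f t * haarJK j k t) = ∫ t in (0:ℝ)..1, F t from rfl, split,
    e1, e2, e3, e4]
  ring

lemma abs_haarCoeff_le {f : ℝ → ℝ} {ξ : ℝ} (hf : Differentiable ℝ f)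
    (hb : ∀ t ∈ Set.Icc (0:ℝ) 1, |deriv f t| ≤ ξ) {j k : ℕ} (hk : k < 2 ^ j) :
    |haarCoeff f j k| ≤ ξ * D j / 2 := by
  have hD := D_pos j
  have hm := eta2_eq j k
  have hb3 := eta3_eq j k
  have h0a : (0:ℝ) ≤ eta1 j k := eta1_nonneg j k
  have ham : eta1 j k ≤ eta2 j k := by linarith
  have hb1 : eta3 j k ≤ 1 := eta3_le_one hk
  have comp : (∫ s in eta1 j k..eta2 j k, f (s + D j)) = ∫ s in eta2 j k..eta3 j k, f s := by
    rw [intervalIntegral.integral_comp_add_right f (D j),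
      show eta1 j k + D j = eta2 j k by rw [hm],
      show eta2 j k + D j = eta3 j k by rw [hm, hb3]; ring]
  have key : (∫ s in eta1 j k..eta2 j k, f s) - (∫ s in eta2 j k..eta3 j k, f s)
      = ∫ s in eta1 j k..eta2 j k, (f s - f (s + D j)) := by
    have hint2 : IntervalIntegrable (fun s => f (s + D j)) volume (eta1 j k) (eta2 j k) :=
      Continuous.intervalIntegrable (hf.continuous.comp (continuous_add_right _)) _ _
    rw [← comp, ← intervalIntegral.integral_sub (hf.continuous.intervalIntegrable _ _) hint2]
  have hbd : ∀ x ∈ Set.uIoc (eta1 j k) (eta2 j k), ‖f x - f (x + D j)‖ ≤ ξ * D j := by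
    intro x hx
    rw [Set.uIoc_of_le ham] at hx
    have hx1 : x ∈ Set.Icc (0:ℝ) 1 := ⟨h0a.trans hx.1.le, by linarith [hx.2]⟩
    have hx2 : x + D j ∈ Set.Icc (0:ℝ) 1 := ⟨by linarith [hx1.1, hD.le], by linarith [hx.2]⟩
    have h := Convex.norm_image_sub_le_of_norm_deriv_le (f := f) (s := Set.Icc (0:ℝ) 1)
      (fun t _ => hf t) (fun t ht => by rw [Real.norm_eq_abs]; exact hb t ht)
      (convex_Icc 0 1) hx2 hx1
    have h2 : ‖x - (x + D j)‖ = D j := by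
      rw [Real.norm_eq_abs, show x - (x + D j) = -(D j) by ring, abs_neg, abs_of_pos hD]
    rw [h2] at h
    exact h
  have hnorm := intervalIntegral.norm_integral_le_of_norm_le_const hbd
  unfold haarCoeff
  rw [integral_mul_haar hf.continuous hk, key, abs_mul,
    abs_of_pos (pow_pos (by norm_num : (0:ℝ) < 2) j)]
  calc (2:ℝ) ^ j * |∫ s in eta1 j k..eta2 j k, (f s - f (s + D j))|
      ≤ (2:ℝ) ^ j * (ξ * D j * |eta2 j k - eta1 j k|) := by
        apply mul_le_mul_of_nonneg_left _ (by positivity)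
        simpa [Real.norm_eq_abs] using hnorm
    _ = ξ * D j / 2 := by
        rw [show eta2 j k - eta1 j k = D j by rw [hm]; ring, abs_of_pos hD]
        unfold D
        rw [pow_succ]
        field_simp

end HaarAux
namespace HaarAux

lemma integral_linear (t a b : ℝ) :
    (∫ s in a..b, (t - s)) = t * (b - a) - (b ^ 2 - a ^ 2) / 2 := by
  have hid : IntervalIntegrable (fun s : ℝ => s) volume a b :=
    Continuous.intervalIntegrable (by fun_prop) _ _
  rw [intervalIntegral.integral_sub intervalIntegrable_const hid]
  simp [integral_id, smul_eq_mul]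
  ring

lemma p2_eq_zero {j k : ℕ} {t : ℝ} (ht : t ≤ eta1 j k) : p2JK j k t = 0 := by
  unfold p2JK
  rcases le_total 0 t with h0 | h0
  · rw [integral_congr_Ioo h0 (g := fun _ => (0:ℝ))
      (fun x hx => by simp [haar_eq_zero_left (lt_of_lt_of_le hx.2 ht)])]
    simp
  · rw [intervalIntegral.integral_symm,
      integral_congr_Ioo h0 (g := fun _ => (0:ℝ))
        (fun x hx => by simp [haar_eq_zero_left (lt_of_lt_of_le hx.2 (eta1_nonneg j k))])]
    simp

lemma p2_eq_of_ge {j k : ℕ} {t : ℝ} (ht : eta3 j k ≤ t) : p2JK j k t = D j ^ 2 := by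
  have hD := D_pos j
  have hm := eta2_eq j k
  have hb3 := eta3_eq j k
  have h0a : (0:ℝ) ≤ eta1 j k := eta1_nonneg j k
  have ham : eta1 j k ≤ eta2 j k := by linarith
  have hmb : eta2 j k ≤ eta3 j k := by linarith
  set F : ℝ → ℝ := fun s => (t - s) * haarJK j k s with hF
  have i1 : IntervalIntegrable F volume 0 (eta1 j k) :=
    intervalIntegrable_congr_Ioo h0a (g := fun _ => (0:ℝ))
      (fun x hx => by simp [hF, haar_eq_zero_left hx.2]) intervalIntegrable_const
  have i2 : IntervalIntegrable F volume (eta1 j k) (eta2 j k) :=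
    intervalIntegrable_congr_Ioo ham (g := fun s => t - s)
      (fun x hx => by simp [hF, haar_eq_one hx.1.le hx.2])
      ((continuous_const.sub continuous_id).intervalIntegrable _ _)
  have i3 : IntervalIntegrable F volume (eta2 j k) (eta3 j k) :=
    intervalIntegrable_congr_Ioo hmb (g := fun s => -(t - s))
      (fun x hx => by simp [hF, haar_eq_neg_one hx.1.le hx.2])
      ((continuous_const.sub continuous_id).neg.intervalIntegrable _ _)
  have i4 : IntervalIntegrable F volume (eta3 j k) t :=
    intervalIntegrable_congr_Ioo ht (g := fun _ => (0:ℝ))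
      (fun x hx => by simp [hF, haar_eq_zero_right hx.1.le]) intervalIntegrable_const
  have e1 : (∫ s in (0:ℝ)..eta1 j k, F s) = 0 := by
    rw [integral_congr_Ioo h0a (g := fun _ => (0:ℝ))
      (fun x hx => by simp [hF, haar_eq_zero_left hx.2])]
    simp
  have e2 : (∫ s in eta1 j k..eta2 j k, F s) = ∫ s in eta1 j k..eta2 j k, (t - s) :=
    integral_congr_Ioo ham (fun x hx => by simp [hF, haar_eq_one hx.1.le hx.2])
  have e3 : (∫ s in eta2 j k..eta3 j k, F s) = ∫ s in eta2 j k..eta3 j k, -(t - s) :=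
    integral_congr_Ioo hmb (fun x hx => by simp [hF, haar_eq_neg_one hx.1.le hx.2])
  have e4 : (∫ s in eta3 j k..t, F s) = 0 := by
    rw [integral_congr_Ioo ht (g := fun _ => (0:ℝ))
      (fun x hx => by simp [hF, haar_eq_zero_right hx.1.le])]
    simp
  have split : (∫ s in (0:ℝ)..t, F s)
      = (∫ s in (0:ℝ)..eta1 j k, F s) + ((∫ s in eta1 j k..eta2 j k, F s)
        + ((∫ s in eta2 j k..eta3 j k, F s) + ∫ s in eta3 j k..t, F s)) := by
    rw [intervalIntegral.integral_add_adjacent_intervals i3 i4,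
      intervalIntegral.integral_add_adjacent_intervals i2 (i3.trans i4),
      intervalIntegral.integral_add_adjacent_intervals i1 (i2.trans (i3.trans i4))]
  have : p2JK j k t = ∫ s in (0:ℝ)..t, F s := rfl
  rw [this, split, e1, e2, e3, e4, intervalIntegral.integral_neg, integral_linear,
    integral_linear]
  rw [hm] at *
  rw [hb3]
  ring

lemma p2_bound_mid {j k : ℕ} {t : ℝ} (h1 : eta1 j k ≤ t) (h2 : t ≤ eta3 j k) :
    |p2JK j k t| ≤ 3 * D j ^ 2 := by
  have hD := D_pos j
  have hm := eta2_eq j k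
  have hb3 := eta3_eq j k
  have h0a : (0:ℝ) ≤ eta1 j k := eta1_nonneg j k
  have ham : eta1 j k ≤ eta2 j k := by linarith
  set F : ℝ → ℝ := fun s => (t - s) * haarJK j k s with hF
  have i1 : IntervalIntegrable F volume 0 (eta1 j k) :=
    intervalIntegrable_congr_Ioo h0a (g := fun _ => (0:ℝ))
      (fun x hx => by simp [hF, haar_eq_zero_left hx.2]) intervalIntegrable_const
  have e1 : (∫ s in (0:ℝ)..eta1 j k, F s) = 0 := by
    rw [integral_congr_Ioo h0a (g := fun _ => (0:ℝ))
      (fun x hx => by simp [hF, haar_eq_zero_left hx.2])]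
    simp
  rcases le_total t (eta2 j k) with hc | hc
  · -- eta1 ≤ t ≤ eta2
    have i2 : IntervalIntegrable F volume (eta1 j k) t :=
      intervalIntegrable_congr_Ioo h1 (g := fun s => t - s)
        (fun x hx => by simp [hF, haar_eq_one hx.1.le (lt_of_lt_of_le hx.2 hc)])
        ((continuous_const.sub continuous_id).intervalIntegrable _ _)
    have split : (∫ s in (0:ℝ)..t, F s)
        = (∫ s in (0:ℝ)..eta1 j k, F s) + ∫ s in eta1 j k..t, F s := by
      rw [intervalIntegral.integral_add_adjacent_intervals i1 i2]
    have e2 : (∫ s in eta1 j k..t, F s) = ∫ s in eta1 j k..t, (t - s) :=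
      integral_congr_Ioo h1 (fun x hx => by
        simp [hF, haar_eq_one hx.1.le (lt_of_lt_of_le hx.2 hc)])
    have hbd : ∀ x ∈ Set.uIoc (eta1 j k) t, ‖t - x‖ ≤ t - eta1 j k := by
      intro x hx
      rw [Set.uIoc_of_le h1] at hx
      rw [Real.norm_eq_abs, abs_of_nonneg (by linarith [hx.2])]
      linarith [hx.1]
    have hn := intervalIntegral.norm_integral_le_of_norm_le_const hbd
    have : p2JK j k t = ∫ s in (0:ℝ)..t, F s := rfl
    rw [this, split, e1, zero_add, e2]
    rw [Real.norm_eq_abs] at hn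
    have hta : t - eta1 j k ≤ D j := by linarith
    have h0t : 0 ≤ t - eta1 j k := by linarith
    calc |∫ s in eta1 j k..t, (t - s)| ≤ (t - eta1 j k) * |t - eta1 j k| := hn
      _ = (t - eta1 j k) * (t - eta1 j k) := by rw [abs_of_nonneg h0t]
      _ ≤ 3 * D j ^ 2 := by nlinarith
  · -- eta2 ≤ t ≤ eta3
    have i2 : IntervalIntegrable F volume (eta1 j k) (eta2 j k) :=
      intervalIntegrable_congr_Ioo ham (g := fun s => t - s)
        (fun x hx => by simp [hF, haar_eq_one hx.1.le hx.2])
        ((continuous_const.sub continuous_id).intervalIntegrable _ _)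
    have i3 : IntervalIntegrable F volume (eta2 j k) t :=
      intervalIntegrable_congr_Ioo hc (g := fun s => -(t - s))
        (fun x hx => by simp [hF, haar_eq_neg_one hx.1.le (lt_of_lt_of_le hx.2 h2)])
        ((continuous_const.sub continuous_id).neg.intervalIntegrable _ _)
    have split : (∫ s in (0:ℝ)..t, F s)
        = (∫ s in (0:ℝ)..eta1 j k, F s) + ((∫ s in eta1 j k..eta2 j k, F s)
          + ∫ s in eta2 j k..t, F s) := by
      rw [intervalIntegral.integral_add_adjacent_intervals i2 i3,
        intervalIntegral.integral_add_adjacent_intervals i1 (i2.trans i3)]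
    have e2 : (∫ s in eta1 j k..eta2 j k, F s) = ∫ s in eta1 j k..eta2 j k, (t - s) :=
      integral_congr_Ioo ham (fun x hx => by simp [hF, haar_eq_one hx.1.le hx.2])
    have e3 : (∫ s in eta2 j k..t, F s) = ∫ s in eta2 j k..t, -(t - s) :=
      integral_congr_Ioo hc (fun x hx => by
        simp [hF, haar_eq_neg_one hx.1.le (lt_of_lt_of_le hx.2 h2)])
    have hbd2 : ∀ x ∈ Set.uIoc (eta1 j k) (eta2 j k), ‖t - x‖ ≤ 2 * D j := by
      intro x hx
      rw [Set.uIoc_of_le ham] at hx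
      rw [Real.norm_eq_abs, abs_of_nonneg (by linarith [hx.2])]
      linarith [hx.1]
    have hbd3 : ∀ x ∈ Set.uIoc (eta2 j k) t, ‖-(t - x)‖ ≤ D j := by
      intro x hx
      rw [Set.uIoc_of_le hc] at hx
      rw [Real.norm_eq_abs, abs_neg, abs_of_nonneg (by linarith [hx.2])]
      linarith [hx.1]
    have hn2 := intervalIntegral.norm_integral_le_of_norm_le_const hbd2
    have hn3 := intervalIntegral.norm_integral_le_of_norm_le_const hbd3
    rw [Real.norm_eq_abs] at hn2 hn3
    have hm2 : |eta2 j k - eta1 j k| = D j := by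
      rw [show eta2 j k - eta1 j k = D j by rw [hm]; ring, abs_of_pos hD]
    have hm3 : |t - eta2 j k| ≤ D j := by
      rw [abs_of_nonneg (by linarith)]; linarith
    have : p2JK j k t = ∫ s in (0:ℝ)..t, F s := rfl
    rw [this, split, e1, zero_add, e2, e3]
    have b2 : |∫ s in eta1 j k..eta2 j k, (t - s)| ≤ 2 * D j ^ 2 := by
      calc |∫ s in eta1 j k..eta2 j k, (t - s)| ≤ 2 * D j * |eta2 j k - eta1 j k| := hn2
        _ = 2 * D j ^ 2 := by rw [hm2]; ring
    have b3 : |∫ s in eta2 j k..t, -(t - s)| ≤ D j ^ 2 := by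
      calc |∫ s in eta2 j k..t, -(t - s)| ≤ D j * |t - eta2 j k| := hn3
        _ ≤ D j ^ 2 := by nlinarith
    calc |(∫ s in eta1 j k..eta2 j k, (t - s)) + ∫ s in eta2 j k..t, -(t - s)|
        ≤ |∫ s in eta1 j k..eta2 j k, (t - s)| + |∫ s in eta2 j k..t, -(t - s)| := abs_add_le _ _
      _ ≤ 3 * D j ^ 2 := by linarith

lemma p2_diff_bound {j k : ℕ} (hk : k < 2 ^ j) (t : ℝ) :
    |p2JK j k t - p2JK j k 1| ≤ 4 * D j ^ 2 := by
  have hD := D_pos j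
  have h1 : p2JK j k 1 = D j ^ 2 := p2_eq_of_ge (eta3_le_one hk)
  rcases le_total t (eta1 j k) with h | h
  · rw [p2_eq_zero h, h1, zero_sub, abs_neg, abs_of_nonneg (sq_nonneg _)]
    nlinarith
  rcases le_total (eta3 j k) t with h' | h'
  · rw [p2_eq_of_ge h', h1, sub_self, abs_zero]
    positivity
  · rw [h1]
    have hmid := p2_bound_mid h h'
    rw [abs_le] at hmid ⊢
    constructor <;> nlinarith [sq_nonneg (D j)]

end HaarAux
namespace HaarAux

lemma inner_bound {f : ℝ → ℝ} {ξ : ℝ} (hf : Differentiable ℝ f)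
    (hb : ∀ t ∈ Set.Icc (0:ℝ) 1, |deriv f t| ≤ ξ) (j : ℕ) (t : ℝ) :
    |∑ k ∈ Finset.range (2 ^ j), haarCoeff f j k * (p2JK j k t - p2JK j k 1)|
      ≤ ξ / 4 ^ (j + 1) := by
  have hξ0 : 0 ≤ ξ := le_trans (abs_nonneg _) (hb 0 (by norm_num))
  have hD := D_pos j
  calc |∑ k ∈ Finset.range (2 ^ j), haarCoeff f j k * (p2JK j k t - p2JK j k 1)|
      ≤ ∑ k ∈ Finset.range (2 ^ j), |haarCoeff f j k * (p2JK j k t - p2JK j k 1)| :=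
        Finset.abs_sum_le_sum_abs _ _
    _ ≤ ∑ k ∈ Finset.range (2 ^ j), (ξ * D j / 2) * (4 * D j ^ 2) := by
        apply Finset.sum_le_sum
        intro k hk
        rw [abs_mul]
        exact mul_le_mul (abs_haarCoeff_le hf hb (Finset.mem_range.mp hk))
          (p2_diff_bound (Finset.mem_range.mp hk) t) (abs_nonneg _) (by positivity)
    _ = ((2:ℝ) ^ j) * ((ξ * D j / 2) * (4 * D j ^ 2)) := by
        rw [Finset.sum_const, Finset.card_range, nsmul_eq_mul]
        push_cast
        ring
    _ = ξ / 4 ^ (j + 1) := by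
        unfold D
        rw [show (4:ℝ) = 2 ^ 2 by norm_num, ← pow_mul]
        field_simp
        ring

lemma truncErrBVP_bound {f : ℝ → ℝ} {ξ : ℝ} (hf : Differentiable ℝ f)
    (hb : ∀ t ∈ Set.Icc (0:ℝ) 1, |deriv f t| ≤ ξ) (J : ℕ) (t : ℝ) :
    |truncErrBVP (haarCoeff f) J t| ≤ ξ / (3 * 4 ^ (J + 1)) := by
  have hξ0 : 0 ≤ ξ := le_trans (abs_nonneg _) (hb 0 (by norm_num))
  set S : ℕ → ℝ := fun m => ∑ k ∈ Finset.range (2 ^ (J + 1 + m)),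
    haarCoeff f (J + 1 + m) k * (p2JK (J + 1 + m) k t - p2JK (J + 1 + m) k 1) with hS
  have hle : ∀ m, |S m| ≤ (ξ / 4 ^ (J + 2)) * (1 / 4 : ℝ) ^ m := by
    intro m
    calc |S m| ≤ ξ / 4 ^ (J + 1 + m + 1) := inner_bound hf hb (J + 1 + m) t
      _ = (ξ / 4 ^ (J + 2)) * (1 / 4 : ℝ) ^ m := by
          rw [show J + 1 + m + 1 = (J + 2) + m by ring, pow_add, div_pow, one_pow]
          field_simp
  have hBsum : Summable (fun m : ℕ => (ξ / 4 ^ (J + 2)) * (1 / 4 : ℝ) ^ m) :=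
    (summable_geometric_of_lt_one (by norm_num) (by norm_num)).mul_left _
  have hSsum : Summable S := Summable.of_norm_bounded hBsum
    (fun m => by rw [Real.norm_eq_abs]; exact hle m)
  have habs : Summable (fun m => |S m|) := by
    rw [summable_abs_iff]; exact hSsum
  have h1 : |∑' m, S m| ≤ ∑' m, |S m| := by
    simpa [Real.norm_eq_abs] using norm_tsum_le_tsum_norm (f := S)
      (by simpa [Real.norm_eq_abs] using habs)
  have h2 : (∑' m, |S m|) ≤ ∑' m : ℕ, (ξ / 4 ^ (J + 2)) * (1 / 4 : ℝ) ^ m :=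
    Summable.tsum_le_tsum hle habs hBsum
  have h3 : (∑' m : ℕ, (ξ / 4 ^ (J + 2)) * (1 / 4 : ℝ) ^ m) = ξ / (3 * 4 ^ (J + 1)) := by
    rw [tsum_mul_left, tsum_geometric_of_lt_one (by norm_num) (by norm_num),
      show (J + 2) = (J + 1) + 1 by ring, pow_succ]
    norm_num
    field_simp
  have hEq : truncErrBVP (haarCoeff f) J t = ∑' m, S m := rfl
  rw [hEq]
  linarith

lemma L2norm_le {f : ℝ → ℝ} {C : ℝ} (hC : 0 ≤ C)
    (h : ∀ t ∈ Set.Icc (0:ℝ) 1, |f t| ≤ C) : L2norm f ≤ C := by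
  have hint : (∫ t in (0:ℝ)..1, f t ^ 2) ≤ C ^ 2 := by
    by_cases hi : IntervalIntegrable (fun t => f t ^ 2) volume 0 1
    · have h2 : (∫ t in (0:ℝ)..1, f t ^ 2) ≤ ∫ t in (0:ℝ)..1, C ^ 2 :=
        intervalIntegral.integral_mono_on (by norm_num) hi intervalIntegrable_const
          (fun x hx => by
            calc f x ^ 2 = |f x| ^ 2 := (sq_abs _).symm
              _ ≤ C ^ 2 := pow_le_pow_left₀ (abs_nonneg _) (h x hx) 2)
      simpa using h2
    · rw [intervalIntegral.integral_undef hi]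
      positivity
  unfold L2norm
  calc Real.sqrt (∫ t in (0:ℝ)..1, f t ^ 2) ≤ Real.sqrt (C ^ 2) := Real.sqrt_le_sqrt hint
    _ = C := Real.sqrt_sq hC

end HaarAux

/-- Convergence of the Haar wavelet method for the BVP:
if `J > log₂(√(2ξ₁/(3ε))) - 1` then
`‖Ẽ_M‖₂ = ‖Ẽ_{M1}‖₂ + ‖Ẽ_{M2}‖₂ < ε`. -/
theorem haar_bvp_convergence (y z : ℝ → ℝ) (ξ₁ ξ₂ : ℝ)
    (hξ : ξ₂ ≤ ξ₁) (hξ₁ : 0 < ξ₁)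
    (hy : Differentiable ℝ y) (hy' : Differentiable ℝ (deriv y))
    (hy'' : Differentiable ℝ (deriv (deriv y)))
    (hz : Differentiable ℝ z) (hz' : Differentiable ℝ (deriv z))
    (hz'' : Differentiable ℝ (deriv (deriv z)))
    (hby : ∀ t ∈ Set.Icc (0:ℝ) 1, |deriv (deriv (deriv y)) t| ≤ ξ₁)
    (hbz : ∀ t ∈ Set.Icc (0:ℝ) 1, |deriv (deriv (deriv z)) t| ≤ ξ₂)
    (J : ℕ) (ε : ℝ) (hε : 0 < ε)
    (hJ : (J : ℝ) > Real.logb 2 (Real.sqrt (2 * ξ₁ / (3 * ε))) - 1) :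
    L2norm (truncErrBVP (haarCoeff (deriv (deriv y))) J) +
      L2norm (truncErrBVP (haarCoeff (deriv (deriv z))) J) < ε := by
  have h4pos : (0:ℝ) < 4 ^ (J + 1) := by positivity
  have hξ₂0 : 0 ≤ ξ₂ := le_trans (abs_nonneg _) (hbz 0 (by norm_num))
  have h1 : L2norm (truncErrBVP (haarCoeff (deriv (deriv y))) J)
      ≤ ξ₁ / (3 * 4 ^ (J + 1)) :=
    HaarAux.L2norm_le (by positivity)
      (fun t _ => HaarAux.truncErrBVP_bound hy'' hby J t)
  have h2 : L2norm (truncErrBVP (haarCoeff (deriv (deriv z))) J)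
      ≤ ξ₂ / (3 * 4 ^ (J + 1)) :=
    HaarAux.L2norm_le (by positivity)
      (fun t _ => HaarAux.truncErrBVP_bound hz'' hbz J t)
  -- arithmetic from hJ
  have hx : (0:ℝ) < 2 * ξ₁ / (3 * ε) := by positivity
  have hs : 0 < Real.sqrt (2 * ξ₁ / (3 * ε)) := Real.sqrt_pos.mpr hx
  have hlog : Real.logb 2 (Real.sqrt (2 * ξ₁ / (3 * ε))) < (J : ℝ) + 1 := by linarith
  have hsq : Real.sqrt (2 * ξ₁ / (3 * ε)) < (2:ℝ) ^ ((J : ℝ) + 1) :=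
    (Real.logb_lt_iff_lt_rpow (by norm_num) hs).mp hlog
  have hrp : (2:ℝ) ^ ((J : ℝ) + 1) = (2:ℝ) ^ (J + 1 : ℕ) := by
    rw [show ((J : ℝ) + 1) = ((J + 1 : ℕ) : ℝ) by push_cast; ring, Real.rpow_natCast]
  rw [hrp] at hsq
  have hkey : 2 * ξ₁ / (3 * ε) < 4 ^ (J + 1) := by
    have hp := pow_lt_pow_left₀ hsq (Real.sqrt_nonneg _) (by norm_num : 2 ≠ 0)
    rw [Real.sq_sqrt hx.le] at hp
    calc 2 * ξ₁ / (3 * ε) < ((2:ℝ) ^ (J + 1)) ^ 2 := hp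
      _ = 4 ^ (J + 1) := by
          rw [← pow_mul, show (4:ℝ) = 2 ^ 2 by norm_num, ← pow_mul]
          ring_nf
  have hfin : ξ₁ / (3 * 4 ^ (J + 1)) + ξ₂ / (3 * 4 ^ (J + 1)) < ε := by
    rw [← add_div, div_lt_iff₀ (by positivity)]
    rw [div_lt_iff₀ (by positivity)] at hkey
    nlinarith
  linarith
end
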